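/- Let f, g be analytic on the unit disk with f(0)=g(0)=0, f'(0)=g'(0)=1, |f(z)/g(z) − 1| < 1 and Re(g(z)/z) > 0 on the unit disk. Then for |z| = r < 1, |z f'(z)/f(z) − 1| ≤ r(3 + r)/(1 − r²). -/

import Mathlib

open Metric

noncomputable def mob (c : ℂ) : ℂ → ℂ := fun x => (x - c) / (1 - (starRingEnd ℂ) c * x)

lemma mob_denom_ne {c x : ℂ} (hc : ‖c‖ < 1) (hx : ‖x‖ < 1) :
    (1 : ℂ) - (starRingEnd ℂ) c * x ≠ 0 := by
  intro h
  have h1 : ‖(starRingEnd ℂ) c * x‖ < 1 := by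
    rw [norm_mul, Complex.norm_conj]
    calc ‖c‖ * ‖x‖ ≤ ‖c‖ * 1 :=
          mul_le_mul_of_nonneg_left hx.le (norm_nonneg c)
      _ < 1 := by simpa using hc
  have : (starRingEnd ℂ) c * x = 1 := by linear_combination -h
  rw [this] at h1
  simp at h1

lemma mob_key (c x : ℂ) :
    Complex.normSq (1 - (starRingEnd ℂ) c * x) - Complex.normSq (x - c)
      = (1 - Complex.normSq c) * (1 - Complex.normSq x) := by
  simp only [Complex.normSq_apply, Complex.sub_re, Complex.sub_im, Complex.mul_re,
    Complex.mul_im, Complex.one_re, Complex.one_im, Complex.conj_re, Complex.conj_im]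
  ring

lemma mob_maps {c x : ℂ} (hc : ‖c‖ < 1) (hx : ‖x‖ < 1) :
    ‖mob c x‖ < 1 := by
  have hd := mob_denom_ne hc hx
  rw [mob, norm_div, div_lt_one (norm_pos_iff.mpr hd)]
  have h1 : Complex.normSq x < 1 := by
    rw [← Complex.sq_norm] at *; nlinarith [norm_nonneg x]
  have h2 : Complex.normSq c < 1 := by
    rw [← Complex.sq_norm] at *; nlinarith [norm_nonneg c]
  have := mob_key c x
  have h3 : Complex.normSq (x - c) < Complex.normSq (1 - (starRingEnd ℂ) c * x) := by nlinarith
  have := norm_nonneg (x - c)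
  rw [← Real.sqrt_lt_sqrt_iff (Complex.normSq_nonneg _)] at h3
  simpa [Complex.norm_def] using h3

lemma mob_hasDerivAt {c x : ℂ} (h : (1 : ℂ) - (starRingEnd ℂ) c * x ≠ 0) :
    HasDerivAt (mob c) ((1 - (starRingEnd ℂ) c * c) / (1 - (starRingEnd ℂ) c * x) ^ 2) x := by
  have h1 : HasDerivAt (fun y : ℂ => y - c) 1 x := (hasDerivAt_id x).sub_const c
  have h2 : HasDerivAt (fun y : ℂ => 1 - (starRingEnd ℂ) c * y) (-(starRingEnd ℂ) c) x :=
    (((hasDerivAt_id x).const_mul ((starRingEnd ℂ) c)).const_sub 1).congr_deriv (by ring)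
  have := h1.div h2 h
  refine this.congr_deriv ?_
  ring

lemma schwarz_pick {ω : ℂ → ℂ} (hd : DifferentiableOn ℂ ω (ball 0 1))
    (hm : Set.MapsTo ω (ball 0 1) (ball 0 1)) {z : ℂ} (hz : z ∈ ball 0 1) :
    ‖deriv ω z‖ * (1 - ‖z‖ ^ 2) ≤ 1 - ‖ω z‖ ^ 2 := by
  set a := z
  set b := ω z with hb_def
  have ha1 : ‖a‖ < 1 := by simpa [Complex.norm_def] using mem_ball_zero_iff.mp hz
  have hb1 : ‖b‖ < 1 := by
    simpa using mem_ball_zero_iff.mp (hm hz)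
  -- φ = mob (-a) maps ball to ball, φ 0 = a
  set φ : ℂ → ℂ := mob (-a) with hφ_def
  have hφ0 : φ 0 = a := by simp [hφ_def, mob]
  have hφmaps : Set.MapsTo φ (ball 0 1) (ball 0 1) := by
    intro x hx
    rw [mem_ball_zero_iff] at hx ⊢
    exact_mod_cast mob_maps (by simpa using ha1) (by simpa using hx)
  have hφdiff : DifferentiableOn ℂ φ (ball 0 1) := by
    intro x hx
    exact (mob_hasDerivAt (mob_denom_ne (by simpa using ha1)
      (by simpa using mem_ball_zero_iff.mp hx))).differentiableAt.differentiableWithinAt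
  set ψ : ℂ → ℂ := mob b with hψ_def
  have hψdiff : DifferentiableOn ℂ ψ (ball 0 1) := by
    intro x hx
    exact (mob_hasDerivAt (mob_denom_ne hb1
      (by simpa using mem_ball_zero_iff.mp hx))).differentiableAt.differentiableWithinAt
  have hψmaps : Set.MapsTo ψ (ball 0 1) (ball 0 1) := by
    intro x hx
    rw [mem_ball_zero_iff] at hx ⊢
    exact mob_maps hb1 (by simpa using hx)
  set F : ℂ → ℂ := ψ ∘ ω ∘ φ with hF_def
  have hFdiff : DifferentiableOn ℂ F (ball 0 1) :=
    (hψdiff.comp (hd.comp hφdiff hφmaps) (hm.comp hφmaps))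
  have hFmaps : Set.MapsTo F (ball 0 1) (ball 0 1) := hψmaps.comp (hm.comp hφmaps)
  have hF0 : F 0 = 0 := by simp [hF_def, Function.comp, hφ0, ← hb_def, hψ_def, mob]; exact Or.inl (sub_self _)
  -- derivatives
  have hωa : DifferentiableAt ℂ ω a := hd.differentiableAt (isOpen_ball.mem_nhds hz)
  have hφ'0 : HasDerivAt φ (1 - (starRingEnd ℂ) a * a) 0 := by
    have := mob_hasDerivAt (c := -a) (x := 0) (by simp)
    simpa using this
  have hψ'b : HasDerivAt ψ ((1 - (starRingEnd ℂ) b * b)⁻¹) b := by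
    have hne : (1 : ℂ) - (starRingEnd ℂ) b * b ≠ 0 := mob_denom_ne hb1 hb1
    have := mob_hasDerivAt (c := b) (x := b) hne
    convert this using 1
    field_simp [sq]
  have hω' : HasDerivAt ω (deriv ω a) a := hωa.hasDerivAt
  have hcomp1 : HasDerivAt (ψ ∘ ω) ((1 - (starRingEnd ℂ) b * b)⁻¹ * deriv ω a) a :=
    HasDerivAt.comp a (hb_def ▸ hψ'b) hω'
  have hc2 : HasDerivAt (ψ ∘ ω) ((1 - (starRingEnd ℂ) b * b)⁻¹ * deriv ω a) (φ 0) := by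
    rw [hφ0]; exact hcomp1
  have hF' : HasDerivAt F ((1 - (starRingEnd ℂ) b * b)⁻¹ * deriv ω a *
      (1 - (starRingEnd ℂ) a * a)) 0 := by
    have := HasDerivAt.comp 0 hc2 hφ'0
    exact this
  have hschwarz : ‖deriv F 0‖ ≤ 1 :=
    Complex.norm_deriv_le_one_of_mapsTo_ball hFdiff (by rw [hF0]; exact hFmaps.mono_right ball_subset_closedBall) one_pos
  rw [hF'.deriv] at hschwarz
  have haa : (1 : ℂ) - (starRingEnd ℂ) a * a = ((1 - ‖a‖ ^ 2 : ℝ) : ℂ) := by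
    rw [← Complex.normSq_eq_conj_mul_self]; push_cast [← Complex.sq_norm]; ring
  have hbb : (1 : ℂ) - (starRingEnd ℂ) b * b = ((1 - ‖b‖ ^ 2 : ℝ) : ℂ) := by
    rw [← Complex.normSq_eq_conj_mul_self]; push_cast [← Complex.sq_norm]; ring
  rw [haa, hbb] at hschwarz
  have hb2 : (0:ℝ) < 1 - ‖b‖ ^ 2 := by nlinarith [norm_nonneg b]
  have ha2 : (0:ℝ) < 1 - ‖a‖ ^ 2 := by nlinarith [norm_nonneg a]
  rw [norm_mul, norm_mul, norm_inv, Complex.norm_real, Complex.norm_real, Real.norm_eq_abs, Real.norm_eq_abs,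
    abs_of_pos hb2, abs_of_pos ha2] at hschwarz
  calc ‖deriv ω a‖ * (1 - ‖a‖ ^ 2)
      = ((1 - ‖b‖ ^ 2)⁻¹ * ‖deriv ω a‖ * (1 - ‖a‖ ^ 2))
        * (1 - ‖b‖ ^ 2) := by field_simp
    _ ≤ 1 * (1 - ‖b‖ ^ 2) := by
        exact mul_le_mul_of_nonneg_right hschwarz hb2.le
    _ = 1 - ‖b‖ ^ 2 := one_mul _

lemma abs_lt_of_normSq_lt {u v : ℂ} (h : Complex.normSq u < Complex.normSq v) :
    ‖u‖ < ‖v‖ := by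
  rw [← Real.sqrt_lt_sqrt_iff (Complex.normSq_nonneg _)] at h
  simpa [Complex.norm_def] using h

lemma normSq_add_sub_one (u : ℂ) :
    Complex.normSq (u + 1) - Complex.normSq (u - 1) = 4 * u.re := by
  simp only [Complex.normSq_apply, Complex.add_re, Complex.add_im, Complex.sub_re,
    Complex.sub_im, Complex.one_re, Complex.one_im]
  ring

theorem F3_log_deriv_bound
    (f g : ℂ → ℂ)
    (hf : DifferentiableOn ℂ f (ball (0 : ℂ) 1))
    (hg : DifferentiableOn ℂ g (ball (0 : ℂ) 1))
    (hf0 : f 0 = 0) (hg0 : g 0 = 0)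
    (hf0' : deriv f 0 = 1) (hg0' : deriv g 0 = 1)
    (hfne : ∀ z ∈ ball (0 : ℂ) 1, z ≠ 0 → f z ≠ 0)
    (hgne : ∀ z ∈ ball (0 : ℂ) 1, z ≠ 0 → g z ≠ 0)
    (hfg : ∀ z ∈ ball (0 : ℂ) 1, z ≠ 0 → ‖f z / g z - 1‖ < 1)
    (hgz : ∀ z ∈ ball (0 : ℂ) 1, z ≠ 0 → 0 < (g z / z).re)
    (z : ℂ) (hzball : z ∈ ball (0 : ℂ) 1) (hz0 : z ≠ 0)
    (r : ℝ) (hr : ‖z‖ = r) :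
    ‖z * deriv f z / f z - 1‖ ≤ r * (3 + r) / (1 - r ^ 2) := by
  subst hr
  set r := ‖z‖ with hr_def
  have hr0 : 0 < r := norm_pos_iff.mpr hz0
  have hr1 : r < 1 := by simpa [hr_def, Complex.norm_def] using mem_ball_zero_iff.mp hzball
  have hr2 : (0:ℝ) < 1 - r ^ 2 := by nlinarith
  have hball : ball (0:ℂ) 1 ∈ nhds (0:ℂ) := ball_mem_nhds 0 one_pos
  -- P = dslope g 0, Q = dslope f 0
  set P := dslope g 0 with hP_def
  set Q := dslope f 0 with hQ_def
  have hPd : DifferentiableOn ℂ P (ball 0 1) := (Complex.differentiableOn_dslope hball).mpr hg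
  have hQd : DifferentiableOn ℂ Q (ball 0 1) := (Complex.differentiableOn_dslope hball).mpr hf
  have hP0 : P 0 = 1 := by simp [hP_def, dslope_same, hg0']
  have hQ0 : Q 0 = 1 := by simp [hQ_def, dslope_same, hf0']
  have hPw : ∀ w : ℂ, w ≠ 0 → P w = g w / w := by
    intro w hw
    rw [hP_def, dslope_of_ne g hw, slope_def_field, hg0, sub_zero, sub_zero]
  have hQw : ∀ w : ℂ, w ≠ 0 → Q w = f w / w := by
    intro w hw
    rw [hQ_def, dslope_of_ne f hw, slope_def_field, hf0, sub_zero, sub_zero]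
  have hPre : ∀ w ∈ ball (0:ℂ) 1, 0 < (P w).re := by
    intro w hw
    rcases eq_or_ne w 0 with rfl | hw0
    · rw [hP0]; norm_num
    · rw [hPw w hw0]; exact hgz w hw hw0
  have hPne : ∀ w ∈ ball (0:ℂ) 1, P w ≠ 0 := by
    intro w hw h; have := hPre w hw; rw [h] at this; simp at this
  -- q = Q / P
  set q : ℂ → ℂ := fun w => Q w / P w with hq_def
  have hqd : DifferentiableOn ℂ q (ball 0 1) := hQd.div hPd hPne
  have hq0 : q 0 = 1 := by simp [hq_def, hP0, hQ0]
  have hqw : ∀ w ∈ ball (0:ℂ) 1, w ≠ 0 → q w = f w / g w := by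
    intro w hw hw0
    rw [hq_def]
    simp only
    rw [hPw w hw0, hQw w hw0]
    field_simp
  have hqball : ∀ w ∈ ball (0:ℂ) 1, ‖q w - 1‖ < 1 := by
    intro w hw
    rcases eq_or_ne w 0 with rfl | hw0
    · rw [hq0]; simp
    · rw [hqw w hw hw0]; exact hfg w hw hw0
  -- ω = q - 1 : Schwarz-Pick and Schwarz
  set ω : ℂ → ℂ := fun w => q w - 1 with hω_def
  have hωd : DifferentiableOn ℂ ω (ball 0 1) := hqd.sub_const 1
  have hωm : Set.MapsTo ω (ball 0 1) (ball 0 1) := by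
    intro w hw; rw [mem_ball_zero_iff]; simpa using hqball w hw
  have hω0 : ω 0 = 0 := by simp [hω_def, hq0]
  set t := ‖q z - 1‖ with ht_def
  have ht_r : t ≤ r := by
    have := Complex.norm_le_norm_of_mapsTo_ball hωd (hωm.mono_right ball_subset_closedBall) hω0
      (z := z) (by simpa [Complex.norm_def] using mem_ball_zero_iff.mp hzball)
    simpa [hω_def] using this
  have ht0 : 0 ≤ t := norm_nonneg _
  have htlt : t < 1 := lt_of_le_of_lt ht_r hr1
  -- derivative of q at z
  have hqz : DifferentiableAt ℂ q z := hqd.differentiableAt (isOpen_ball.mem_nhds hzball)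
  have hPz : DifferentiableAt ℂ P z := hPd.differentiableAt (isOpen_ball.mem_nhds hzball)
  have hQz : DifferentiableAt ℂ Q z := hQd.differentiableAt (isOpen_ball.mem_nhds hzball)
  set q' := deriv q z with hq'_def
  set P' := deriv P z with hP'_def
  have hωderiv : deriv ω z = q' := by
    have : HasDerivAt ω q' z := (hqz.hasDerivAt).sub_const 1
    exact this.deriv
  have hSPq : ‖q'‖ * (1 - r ^ 2) ≤ 1 - t ^ 2 := by
    have := schwarz_pick hωd hωm hzball
    rw [hωderiv] at this
    simpa [hω_def, ht_def, hr_def] using this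
  -- W = (P-1)/(P+1) : Schwarz-Pick
  have hPadd : ∀ w ∈ ball (0:ℂ) 1, P w + 1 ≠ 0 := by
    intro w hw h
    have h1 := hPre w hw
    have : (P w + 1).re = 0 := by rw [h]; simp
    simp only [Complex.add_re, Complex.one_re] at this
    linarith
  set W : ℂ → ℂ := fun w => (P w - 1) / (P w + 1) with hW_def
  have hWd : DifferentiableOn ℂ W (ball 0 1) := (hPd.sub_const 1).div (hPd.add_const 1) hPadd
  have hWm : Set.MapsTo W (ball 0 1) (ball 0 1) := by
    intro w hw
    rw [mem_ball_zero_iff]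
    show ‖(P w - 1) / (P w + 1)‖ < 1
    rw [norm_div, div_lt_one (norm_pos_iff.mpr (hPadd w hw))]
    apply abs_lt_of_normSq_lt
    have := normSq_add_sub_one (P w)
    have := hPre w hw
    linarith
  have hW0 : W 0 = 0 := by
    show (P 0 - 1) / (P 0 + 1) = 0
    rw [hP0]; simp
  have hWderiv : HasDerivAt W (2 * P' / (P z + 1) ^ 2) z := by
    have h1 : HasDerivAt (fun w => P w - 1) P' z := (hPz.hasDerivAt).sub_const 1
    have h2 : HasDerivAt (fun w => P w + 1) P' z := (hPz.hasDerivAt).add_const 1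
    have := h1.div h2 (hPadd z hzball)
    refine this.congr_deriv ?_
    ring
  have hSPW : ‖2 * P' / (P z + 1) ^ 2‖ * (1 - r ^ 2)
      ≤ 1 - ‖W z‖ ^ 2 := by
    have := schwarz_pick hWd hWm hzball
    rw [hWderiv.deriv] at this
    simpa [hr_def] using this
  -- deduce |P'| * (1 - r^2) ≤ 2 * (P z).re
  have hs : 0 < ‖P z + 1‖ := norm_pos_iff.mpr (hPadd z hzball)
  have hPabs' : ‖P'‖ * (1 - r ^ 2) ≤ 2 * (P z).re := by
    have hWz : ‖W z‖ ^ 2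
        = Complex.normSq (P z - 1) / Complex.normSq (P z + 1) := by
      rw [hW_def]
      simp only
      rw [norm_div, div_pow, Complex.sq_norm, Complex.sq_norm]
    have hkey := normSq_add_sub_one (P z)
    have habs : ‖2 * P' / (P z + 1) ^ 2‖
        = 2 * ‖P'‖ / Complex.normSq (P z + 1) := by
      rw [norm_div, norm_mul, norm_pow, Complex.sq_norm]
      norm_num
    rw [habs, hWz] at hSPW
    have hns : 0 < Complex.normSq (P z + 1) := by
      rw [← Complex.sq_norm]; positivity
    rw [div_mul_eq_mul_div, div_le_iff₀ hns] at hSPW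
    have : (1 - Complex.normSq (P z - 1) / Complex.normSq (P z + 1))
        * Complex.normSq (P z + 1) = 4 * (P z).re := by
      field_simp
      linarith
    rw [this] at hSPW
    linarith
  -- f w = w * Q w near z, Q = P * q near z
  have hfQ : Set.EqOn f (fun w => w * Q w) (ball 0 1) := by
    intro w hw
    rcases eq_or_ne w 0 with rfl | hw0
    · simp [hf0]
    · show f w = w * Q w
      rw [hQw w hw0]; field_simp
  have hQPq : Set.EqOn Q (fun w => P w * q w) (ball 0 1) := by
    intro w hw
    rw [hq_def]
    simp only
    field_simp [hPne w hw]
  have hderivf : deriv f z = Q z + z * deriv Q z := by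
    have heq : f =ᶠ[nhds z] fun w => w * Q w :=
      Filter.eventuallyEq_of_mem (isOpen_ball.mem_nhds hzball) hfQ
    rw [heq.deriv_eq]
    have : HasDerivAt (fun w => w * Q w) (1 * Q z + z * deriv Q z) z :=
      (hasDerivAt_id z).mul hQz.hasDerivAt
    rw [this.deriv]; ring
  have hderivQ : deriv Q z = P' * q z + P z * q' := by
    have heq : Q =ᶠ[nhds z] fun w => P w * q w :=
      Filter.eventuallyEq_of_mem (isOpen_ball.mem_nhds hzball) hQPq
    rw [heq.deriv_eq]
    exact (hPz.hasDerivAt.mul hqz.hasDerivAt).deriv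
  have hqzne : q z ≠ 0 := by
    intro h
    have := hqball z hzball
    rw [h] at this
    simp at this
  have hPzne : P z ≠ 0 := hPne z hzball
  have hfzne : f z ≠ 0 := hfne z hzball hz0
  have hfz : f z = z * Q z := hfQ hzball
  have hQzval : Q z = P z * q z := hQPq hzball
  -- main identity
  have hmain : z * deriv f z / f z - 1 = z * P' / P z + z * q' / q z := by
    rw [hderivf, hfz, hderivQ, hQzval]
    field_simp
    ring
  rw [hmain]
  -- bounds
  have hb1 : ‖z * P' / P z‖ ≤ 2 * r / (1 - r ^ 2) := by
    rw [norm_div, norm_mul]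
    rw [div_le_div_iff₀ (norm_pos_iff.mpr hPzne) hr2]
    have h1 : (P z).re ≤ ‖P z‖ := Complex.re_le_norm _
    calc ‖z‖ * ‖P'‖ * (1 - r ^ 2)
        = r * (‖P'‖ * (1 - r ^ 2)) := by rw [← hr_def]; ring
      _ ≤ r * (2 * (P z).re) := by
          exact mul_le_mul_of_nonneg_left hPabs' hr0.le
      _ ≤ r * (2 * ‖P z‖) := by
          apply mul_le_mul_of_nonneg_left _ hr0.le
          linarith
      _ = 2 * r * ‖P z‖ := by ring
  have hb2 : ‖z * q' / q z‖ ≤ r * (1 + r) / (1 - r ^ 2) := by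
    rw [norm_div, norm_mul]
    have hq_lb : 1 - t ≤ ‖q z‖ := by
      have h := norm_sub_norm_le (1 : ℂ) (q z)
      rw [norm_sub_rev] at h
      simp only [norm_one] at h
      rw [ht_def]
      linarith
    have hqpos : 0 < ‖q z‖ := norm_pos_iff.mpr hqzne
    rw [div_le_div_iff₀ hqpos hr2]
    calc ‖z‖ * ‖q'‖ * (1 - r ^ 2)
        = r * (‖q'‖ * (1 - r ^ 2)) := by rw [← hr_def]; ring
      _ ≤ r * (1 - t ^ 2) := mul_le_mul_of_nonneg_left hSPq hr0.le
      _ = r * (1 + t) * (1 - t) := by ring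
      _ ≤ r * (1 + r) * (1 - t) := by
          apply mul_le_mul_of_nonneg_right _ (by linarith)
          nlinarith
      _ ≤ r * (1 + r) * ‖q z‖ := by
          apply mul_le_mul_of_nonneg_left hq_lb
          nlinarith
  calc ‖z * P' / P z + z * q' / q z‖
      ≤ ‖z * P' / P z‖ + ‖z * q' / q z‖ := norm_add_le _ _
    _ ≤ 2 * r / (1 - r ^ 2) + r * (1 + r) / (1 - r ^ 2) := add_le_add hb1 hb2
    _ = r * (3 + r) / (1 - r ^ 2) := by field_simp; ring
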